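/- Let J: ℝ^m → ℝ be analytic with J ≥ 0, let x* be a critical point with J(x*) = 0 satisfying the Lojasiewicz gradient inequality |J(x)|^θ ≤ c‖grad J(x)‖ for ‖x − x*‖ < δ₁ with θ ∈ [1/2, 1) and c > 0. Then any trajectory of ẋ = −grad J(x) started at x₂ sufficiently close to x* has finite length bounded by (c/(1−θ)) J(x₂)^{1−θ}. -/

import Mathlib

open Matrix MeasureTheory

/-- The norm induced by a positive-definite matrix `M`: `‖u‖_M = √(uᵀMu)`. -/
noncomputable def mNorm {m : ℕ} (M : Matrix (Fin m) (Fin m) ℝ) (u : Fin m → ℝ) : ℝ :=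
  Real.sqrt (u ⬝ᵥ M *ᵥ u)

open scoped MatrixOrder in
/-- Euclidean realization of the `M`-inner product via the psd square root of `M`. -/
noncomputable def eMap {m : ℕ} (M : Matrix (Fin m) (Fin m) ℝ) (hM : M.PosDef) :
    (Fin m → ℝ) →L[ℝ] EuclideanSpace ℝ (Fin m) :=
  LinearMap.toContinuousLinearMap
    { toFun := fun u => (WithLp.equiv 2 (Fin m → ℝ)).symm (CFC.sqrt M *ᵥ u)
      map_add' := by intro u v; simp [Matrix.mulVec_add]
      map_smul' := by intro r u; simp [Matrix.mulVec_smul] }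

open scoped MatrixOrder in
lemma eMap_apply {m : ℕ} (M : Matrix (Fin m) (Fin m) ℝ) (hM : M.PosDef)
    (u : Fin m → ℝ) (i : Fin m) :
    eMap M hM u i = (CFC.sqrt M *ᵥ u) i := rfl

open scoped MatrixOrder in
lemma mNorm_eq_norm_eMap {m : ℕ} {M : Matrix (Fin m) (Fin m) ℝ} (hM : M.PosDef)
    (u : Fin m → ℝ) : mNorm M u = ‖eMap M hM u‖ := by
  have hs : (CFC.sqrt M)ᵀ = CFC.sqrt M := by
    have := (CFC.sqrt_nonneg M).isSelfAdjoint
    rw [IsSelfAdjoint, Matrix.star_eq_conjTranspose,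
      Matrix.conjTranspose_eq_transpose_of_trivial] at this
    exact this
  have key : (CFC.sqrt M *ᵥ u) ⬝ᵥ (CFC.sqrt M *ᵥ u) = u ⬝ᵥ M *ᵥ u := by
    rw [Matrix.dotProduct_mulVec _ _ u, Matrix.vecMul_mulVec, hs,
      CFC.sqrt_mul_sqrt_self M hM.posSemidef.nonneg, ← Matrix.dotProduct_mulVec]
  rw [EuclideanSpace.norm_eq, mNorm, ← key]
  congr 1
  rw [dotProduct]
  refine Finset.sum_congr rfl fun i _ => ?_
  rw [← pow_two, eMap_apply, Real.norm_eq_abs, sq_abs]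

lemma sq_mNorm {m : ℕ} {M : Matrix (Fin m) (Fin m) ℝ} (hM : M.PosDef)
    (u : Fin m → ℝ) : (mNorm M u)^2 = u ⬝ᵥ M *ᵥ u := by
  have h := hM.posSemidef.dotProduct_mulVec_nonneg u
  simp only [star_trivial] at h
  exact Real.sq_sqrt h

lemma mNorm_nonneg {m : ℕ} (M : Matrix (Fin m) (Fin m) ℝ) (u : Fin m → ℝ) :
    0 ≤ mNorm M u := Real.sqrt_nonneg _

lemma eMap_injective {m : ℕ} {M : Matrix (Fin m) (Fin m) ℝ} (hM : M.PosDef) :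
    Function.Injective (eMap M hM) := by
  intro u v huv
  by_contra hne
  have hsub : u - v ≠ 0 := sub_ne_zero.2 hne
  have hpos := hM.dotProduct_mulVec_pos hsub
  simp only [star_trivial] at hpos
  have h0 : eMap M hM (u - v) = 0 := by rw [map_sub, huv, sub_self]
  have : (mNorm M (u - v))^2 = 0 := by
    rw [mNorm_eq_norm_eMap hM, h0, norm_zero]; ring
  rw [sq_mNorm hM] at this
  exact absurd this (ne_of_gt hpos)

/-- `eMap` as a continuous linear equivalence. -/
noncomputable def eEquiv {m : ℕ} (M : Matrix (Fin m) (Fin m) ℝ) (hM : M.PosDef) :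
    (Fin m → ℝ) ≃L[ℝ] EuclideanSpace ℝ (Fin m) :=
  LinearEquiv.toContinuousLinearEquiv
    ((eMap M hM : (Fin m → ℝ) →ₗ[ℝ] EuclideanSpace ℝ (Fin m)).linearEquivOfInjective
      (eMap_injective hM) (by simp))

lemma eEquiv_apply {m : ℕ} (M : Matrix (Fin m) (Fin m) ℝ) (hM : M.PosDef)
    (u : Fin m → ℝ) : eEquiv M hM u = eMap M hM u := rfl

/-- Lojasiewicz length bound. If `J ≥ 0` is analytic, `x*` is a critical point
with `J(x*) = 0` satisfying the Lojasiewicz gradient inequality near `x*`, then every gradient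
trajectory started sufficiently close to `x*` (along which `J → 0`) has finite length bounded
by `(c/(1−θ)) J(x₂)^{1−θ}`. -/
theorem stmt18 {m : ℕ} (M : Matrix (Fin m) (Fin m) ℝ) (hM : M.PosDef)
    (J : (Fin m → ℝ) → ℝ) (hanalytic : ∀ x, AnalyticAt ℝ J x)
    (hJnonneg : ∀ x, 0 ≤ J x)
    (g : (Fin m → ℝ) → (Fin m → ℝ))
    -- `g` is the gradient of `J` w.r.t. the inner product `⟨u,w⟩ = uᵀMw`
    (hg : ∀ x w : Fin m → ℝ,
      HasDerivAt (fun s : ℝ => J (x + s • w)) ((g x) ⬝ᵥ M *ᵥ w) 0)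
    (xstar : Fin m → ℝ) (hcrit : g xstar = 0) (hJ0 : J xstar = 0)
    (θ c δ₁ : ℝ) (hθ : 1/2 ≤ θ ∧ θ < 1) (hc : 0 < c) (hδ₁ : 0 < δ₁)
    -- Lojasiewicz gradient inequality
    (hloja : ∀ x : Fin m → ℝ, mNorm M (x - xstar) < δ₁ →
      |J x| ^ θ ≤ c * mNorm M (g x)) :
    ∃ δ₂ : ℝ, 0 < δ₂ ∧
      ∀ x : ℝ → (Fin m → ℝ),
        (∀ t : ℝ, HasDerivAt x (-(g (x t))) t) →
        mNorm M (x 0 - xstar) < δ₂ →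
        Filter.Tendsto (fun t => J (x t)) Filter.atTop (nhds 0) →
        IntegrableOn (fun t => mNorm M (g (x t))) (Set.Ici (0 : ℝ)) ∧
        ∫ t in Set.Ici (0 : ℝ), mNorm M (g (x t))
          ≤ (c / (1 - θ)) * (J (x 0)) ^ (1 - θ) := by
  obtain ⟨hθhalf, hθ1⟩ := hθ
  have h1θ : 0 < 1 - θ := by linarith
  have hθpos : 0 < θ := by linarith
  -- gradient identity
  have grad_eq : ∀ z w : Fin m → ℝ, fderiv ℝ J z w = g z ⬝ᵥ M *ᵥ w := by
    intro z w
    have hd : HasFDerivAt J (fderiv ℝ J z) z :=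
      (hanalytic z).differentiableAt.hasFDerivAt
    have hline : HasDerivAt (fun s : ℝ => z + s • w) w 0 := by
      simpa using ((hasDerivAt_id (0:ℝ)).smul_const w).const_add z
    have hz : z = z + (0:ℝ) • w := by simp
    rw [hz] at hd
    have hcomp : HasDerivAt (fun s : ℝ => J (z + s • w)) (fderiv ℝ J z w) 0 := by
      have := hd.comp_hasDerivAt (0:ℝ) hline
      have h' := this; simp only [← hz] at h'; exact h'
    exact hcomp.unique (hg z w)
  -- continuity of g
  have hgcont : Continuous g := by
    have hJC : ContDiff ℝ 1 J := by
      rw [contDiff_iff_contDiffAt]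
      exact fun z => (hanalytic z).contDiffAt
    have hfd : Continuous fun z => fderiv ℝ J z := hJC.continuous_fderiv one_ne_zero
    have hdet : IsUnit M.det := isUnit_iff_ne_zero.2 (ne_of_gt hM.det_pos)
    have hform : ∀ z, g z = (fun j => fderiv ℝ J z (Pi.single j 1)) ᵥ* M⁻¹ := by
      intro z
      have h1 : (g z) ᵥ* M = fun j => fderiv ℝ J z (Pi.single j 1) := by
        funext j
        rw [grad_eq]
        simp [Matrix.vecMul, dotProduct, Matrix.mulVec,
          Pi.single_apply, mul_comm]
      rw [← h1, Matrix.vecMul_vecMul, Matrix.mul_nonsing_inv _ hdet, Matrix.vecMul_one]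
    rw [funext hform]
    refine continuous_pi fun j => ?_
    simp only [Matrix.vecMul, dotProduct]
    refine continuous_finset_sum _ fun i _ => ?_
    exact ((hfd.clm_apply continuous_const).mul continuous_const)
  have hJcont : Continuous J := by
    rw [continuous_iff_continuousAt]; exact fun z => (hanalytic z).continuousAt
  -- choice of ε and δ₂
  set K₀ : ℝ := ((δ₁ * (1 - θ)) / (8 * c))
  have hK₀ : 0 < K₀ := by positivity
  set ε : ℝ := K₀ ^ ((1:ℝ)/(1-θ))
  have hε : 0 < ε := Real.rpow_pos_of_pos hK₀ _
  have hεpow : (c/(1-θ)) * ε ^ (1-θ) ≤ δ₁/8 := by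
    have h1 : ε ^ (1-θ) = K₀ := by
      show (K₀ ^ ((1:ℝ)/(1-θ))) ^ (1-θ) = K₀
      rw [show (1:ℝ)/(1-θ) = (1-θ)⁻¹ from one_div _]
      exact Real.rpow_inv_rpow hK₀.le (ne_of_gt h1θ)
    rw [h1]
    have h2 : (c/(1-θ)) * K₀ = δ₁/8 := by
      have hcne : c ≠ 0 := ne_of_gt hc
      have hθne : (1-θ) ≠ 0 := ne_of_gt h1θ
      simp only [K₀]
      field_simp
    rw [h2]
  -- choose δ₂ with J < ε on the mNorm-ball of radius δ₂, δ₂ ≤ δ₁/8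
  obtain ⟨δ₂, hδ₂pos, hδ₂le, hδ₂J⟩ :
      ∃ δ₂ : ℝ, 0 < δ₂ ∧ δ₂ ≤ δ₁/8 ∧ ∀ z, mNorm M (z - xstar) < δ₂ → J z < ε := by
    have hcont : ContinuousAt (fun v => J ((eEquiv M hM).symm v)) (eEquiv M hM xstar) :=
      (hJcont.comp (eEquiv M hM).symm.continuous).continuousAt
    obtain ⟨r, hr, hball⟩ := Metric.continuousAt_iff.mp hcont ε hε
    refine ⟨min r (δ₁/8), lt_min hr (by positivity), min_le_right _ _, ?_⟩
    intro z hz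
    have hdist : dist (eEquiv M hM z) (eEquiv M hM xstar) < r := by
      rw [dist_eq_norm]
      calc ‖eEquiv M hM z - eEquiv M hM xstar‖
          = ‖eEquiv M hM (z - xstar)‖ := by rw [map_sub]
        _ = mNorm M (z - xstar) := by
            rw [eEquiv_apply, ← mNorm_eq_norm_eMap hM]
        _ < r := lt_of_lt_of_le hz (min_le_left _ _)
    have := hball hdist
    rw [ContinuousLinearEquiv.symm_apply_apply, ContinuousLinearEquiv.symm_apply_apply,
      hJ0, Real.dist_eq, sub_zero] at this
    exact lt_of_le_of_lt (le_abs_self _) this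
  refine ⟨δ₂, hδ₂pos, ?_⟩
  intro x hx hx0 _htend
  -- basic objects
  set F : ℝ → ℝ := fun t => J (x t) with hFdef
  set φ : ℝ → ℝ := fun t => mNorm M (g (x t)) with hφdef
  have xcont : Continuous x := by
    rw [continuous_iff_continuousAt]; exact fun t => (hx t).continuousAt
  have mNormCont : Continuous fun u : Fin m → ℝ => mNorm M u := by
    simp only [funext fun u => mNorm_eq_norm_eMap hM u]
    exact (eMap M hM).continuous.norm
  have φcont : Continuous φ := mNormCont.comp (hgcont.comp xcont)
  have φnonneg : ∀ t, 0 ≤ φ t := fun t => mNorm_nonneg _ _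
  have Fnonneg : ∀ t, 0 ≤ F t := fun t => hJnonneg _
  have hF : ∀ t, HasDerivAt F (-(φ t)^2) t := by
    intro t
    have hd : HasFDerivAt J (fderiv ℝ J (x t)) (x t) :=
      (hanalytic (x t)).differentiableAt.hasFDerivAt
    have hcomp := hd.comp_hasDerivAt t (hx t)
    have hval : fderiv ℝ J (x t) (-(g (x t))) = -(φ t)^2 := by
      rw [grad_eq]
      simp only [hφdef, sq_mNorm hM]
      rw [Matrix.mulVec_neg, dotProduct_neg]
    rw [hval] at hcomp
    exact hcomp
  have Fanti : Antitone F := by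
    apply antitone_of_deriv_nonpos
    · exact fun t => (hF t).differentiableAt
    · intro t
      rw [(hF t).deriv]
      simp [sq_nonneg]
  have hφ0 : ∀ t, F t = 0 → φ t = 0 := by
    intro t ht
    have hmin : IsLocalMin F t := by
      apply Filter.Eventually.of_forall
      intro s; rw [ht]; exact Fnonneg s
    have := hmin.deriv_eq_zero
    rw [(hF t).deriv] at this
    have h2 : (φ t)^2 = 0 := by linarith [neg_eq_zero.1 this]
    exact pow_eq_zero_iff two_ne_zero |>.mp h2
  -- Lojasiewicz along the trajectory
  have loja' : ∀ s, mNorm M (x s - xstar) < δ₁ → (F s) ^ θ ≤ c * φ s := by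
    intro s hs
    have := hloja (x s) hs
    rwa [abs_of_nonneg (hJnonneg _)] at this
  -- the key growth claim
  have hFcont : Continuous F := hJcont.comp xcont
  have hcθ : (0:ℝ) ≤ c/(1-θ) := by positivity
  have claimA : ∀ b : ℝ, 0 ≤ b → (∀ s ∈ Set.Icc (0:ℝ) b, mNorm M (x s - xstar) < δ₁) →
      0 < F b →
      ∫ s in (0:ℝ)..b, φ s ≤ (c/(1-θ)) * ((F 0)^(1-θ) - (F b)^(1-θ)) := by
    intro b hb hball hFb
    have hFpos : ∀ s ∈ Set.Icc (0:ℝ) b, 0 < F s := fun s hs =>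
      lt_of_lt_of_le hFb (Fanti hs.2)
    set G' : ℝ → ℝ := fun t => -(c * (F t)^(-θ) * (φ t)^2) with hG'def
    have hG : ∀ t ∈ Set.Icc (0:ℝ) b,
        HasDerivAt (fun r => (c/(1-θ)) * (F r)^(1-θ)) (G' t) t := by
      intro t ht
      have h1 : HasDerivAt (fun r => (F r)^(1-θ))
          (-(φ t)^2 * (1-θ) * (F t)^(1-θ-1)) t :=
        (hF t).rpow_const (Or.inl (ne_of_gt (hFpos t ht)))
      have h2 := h1.const_mul (c/(1-θ))
      refine h2.congr_deriv ?_
      have he : (1-θ-1 : ℝ) = -θ := by ring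
      rw [he, hG'def]
      have hne : (1-θ : ℝ) ≠ 0 := ne_of_gt h1θ
      field_simp
    have key : ∀ t ∈ Set.Icc (0:ℝ) b, φ t ≤ -(G' t) := by
      intro t ht
      have hA : 0 < (F t)^θ := Real.rpow_pos_of_pos (hFpos t ht) θ
      have hLoj : (F t)^θ ≤ c * φ t := loja' t (hball t ht)
      have hinv : (F t)^(-θ) = ((F t)^θ)⁻¹ := Real.rpow_neg (Fnonneg t) θ
      rw [hG'def]
      simp only [neg_neg]
      rw [hinv]
      rw [show c * ((F t)^θ)⁻¹ * (φ t)^2 = (c * (φ t)^2) / ((F t)^θ) by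
        field_simp]
      rw [le_div_iff₀ hA]
      nlinarith [mul_le_mul_of_nonneg_left hLoj (φnonneg t)]
    have hG'cont : ContinuousOn G' (Set.Icc (0:ℝ) b) := by
      have h1 : ContinuousOn (fun t => (F t)^(-θ)) (Set.Icc (0:ℝ) b) :=
        ContinuousOn.rpow_const (hFcont.continuousOn)
          (fun t ht => Or.inl (ne_of_gt (hFpos t ht)))
      exact ((continuousOn_const.mul h1).mul (φcont.pow 2).continuousOn).neg
    have huIcc : Set.uIcc (0:ℝ) b = Set.Icc (0:ℝ) b := Set.uIcc_of_le hb
    have hG'int : IntervalIntegrable G' volume 0 b := by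
      apply ContinuousOn.intervalIntegrable
      rwa [huIcc]
    have hFTC : ∫ t in (0:ℝ)..b, G' t
        = (c/(1-θ)) * (F b)^(1-θ) - (c/(1-θ)) * (F 0)^(1-θ) := by
      apply intervalIntegral.integral_eq_sub_of_hasDerivAt
      · intro t ht
        rw [huIcc] at ht
        exact hG t ht
      · exact hG'int
    have hmono : ∫ s in (0:ℝ)..b, φ s ≤ ∫ s in (0:ℝ)..b, -(G' s) := by
      apply intervalIntegral.integral_mono_on hb
        (φcont.intervalIntegrable _ _) hG'int.neg
      exact key
    rw [intervalIntegral.integral_neg, hFTC] at hmono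
    linarith [hmono]
  have claim : ∀ b : ℝ, 0 ≤ b → (∀ s ∈ Set.Icc (0:ℝ) b, mNorm M (x s - xstar) < δ₁) →
      ∫ s in (0:ℝ)..b, φ s ≤ (c/(1-θ)) * (F 0) ^ (1-θ) := by
    intro b hb hball
    have hK0 : 0 ≤ (c/(1-θ)) * (F 0)^(1-θ) :=
      mul_nonneg hcθ (Real.rpow_nonneg (Fnonneg 0) _)
    by_cases hFb : 0 < F b
    · calc ∫ s in (0:ℝ)..b, φ s
          ≤ (c/(1-θ)) * ((F 0)^(1-θ) - (F b)^(1-θ)) := claimA b hb hball hFb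
        _ ≤ (c/(1-θ)) * (F 0)^(1-θ) := by
            nlinarith [Real.rpow_nonneg (Fnonneg b) (1-θ)]
    · have hFb0 : F b = 0 := le_antisymm (not_lt.1 hFb) (Fnonneg b)
      set Z : Set ℝ := {t | t ∈ Set.Icc (0:ℝ) b ∧ F t = 0} with hZdef
      have hZne : Z.Nonempty := ⟨b, ⟨hb, le_refl b⟩, hFb0⟩
      have hZclosed : IsClosed Z :=
        (isClosed_Icc.preimage continuous_id).inter
          (isClosed_eq hFcont continuous_const)
      have hZbdd : BddBelow Z := ⟨0, fun s hs => hs.1.1⟩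
      set t₁ := sInf Z with ht₁def
      have ht₁Z : t₁ ∈ Z := hZclosed.csInf_mem hZne hZbdd
      obtain ⟨⟨ht₁0, ht₁b⟩, hFt₁⟩ := ht₁Z
      have hφzero : ∀ s, t₁ ≤ s → φ s = 0 := fun s hs =>
        hφ0 s (le_antisymm (hFt₁ ▸ Fanti hs) (Fnonneg s))
      have hsplit : ∫ s in (0:ℝ)..b, φ s
          = (∫ s in (0:ℝ)..t₁, φ s) + ∫ s in t₁..b, φ s :=
        (intervalIntegral.integral_add_adjacent_intervals
          (φcont.intervalIntegrable _ _) (φcont.intervalIntegrable _ _)).symm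
      have hsecond : ∫ s in t₁..b, φ s = 0 := by
        rw [show (0:ℝ) = ∫ s in t₁..b, (0:ℝ) from (intervalIntegral.integral_zero).symm]
        apply intervalIntegral.integral_congr
        intro s hs
        rw [Set.uIcc_of_le ht₁b] at hs
        exact hφzero s hs.1
      have hfirst : ∫ s in (0:ℝ)..t₁, φ s ≤ (c/(1-θ)) * (F 0)^(1-θ) := by
        rcases eq_or_lt_of_le ht₁0 with h0|h0
        · rw [← h0, intervalIntegral.integral_same]
          exact hK0
        · have hFpos' : ∀ s, 0 ≤ s → s < t₁ → 0 < F s := by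
            intro s hs hst
            rcases (Fnonneg s).lt_or_eq with h|h
            · exact h
            · exfalso
              have : s ∈ Z := ⟨⟨hs, le_trans hst.le ht₁b⟩, h.symm⟩
              exact absurd (csInf_le hZbdd this) (not_le.2 hst)
          have hstep : ∀ s, 0 ≤ s → s < t₁ →
              ∫ u in (0:ℝ)..s, φ u ≤ (c/(1-θ)) * (F 0)^(1-θ) := by
            intro s hs hst
            have hball' : ∀ u ∈ Set.Icc (0:ℝ) s, mNorm M (x u - xstar) < δ₁ :=
              fun u hu => hball u ⟨hu.1, le_trans hu.2 (le_trans hst.le ht₁b)⟩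
            calc ∫ u in (0:ℝ)..s, φ u
                ≤ (c/(1-θ)) * ((F 0)^(1-θ) - (F s)^(1-θ)) :=
                  claimA s hs hball' (hFpos' s hs hst)
              _ ≤ (c/(1-θ)) * (F 0)^(1-θ) := by
                  nlinarith [Real.rpow_nonneg (Fnonneg s) (1-θ)]
          have hprim : ContinuousAt (fun r => ∫ u in (0:ℝ)..r, φ u) t₁ := by
            have := intervalIntegral.integral_hasDerivAt_right
              (φcont.intervalIntegrable (0:ℝ) t₁)
              (φcont.stronglyMeasurableAtFilter _ _) (φcont.continuousAt)
            exact this.continuousAt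
          have htd : Filter.Tendsto (fun r => ∫ u in (0:ℝ)..r, φ u)
              (nhdsWithin t₁ (Set.Iio t₁)) (nhds (∫ u in (0:ℝ)..t₁, φ u)) :=
            hprim.continuousWithinAt.tendsto
          apply le_of_tendsto htd
          filter_upwards [Ioo_mem_nhdsLT_of_mem
            (show t₁ ∈ Set.Ioc (0:ℝ) t₁ from ⟨h0, le_refl t₁⟩)] with s hs
          exact hstep s hs.1.le hs.2
      rw [hsplit, hsecond, add_zero]
      exact hfirst
  -- path-length bound
  have ρbound : ∀ t : ℝ, 0 ≤ t →
      mNorm M (x t - xstar) ≤ mNorm M (x 0 - xstar) + ∫ s in (0:ℝ)..t, φ s := by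
    intro t ht
    set y : ℝ → EuclideanSpace ℝ (Fin m) := fun s => eMap M hM (x s) with hydef
    have hy : ∀ s, HasDerivAt y (eMap M hM (-(g (x s)))) s := fun s =>
      ((eMap M hM).hasFDerivAt).comp_hasDerivAt s (hx s)
    have hcont : Continuous fun s => eMap M hM (-(g (x s))) :=
      (eMap M hM).continuous.comp (hgcont.comp xcont).neg
    have hftc : ∫ s in (0:ℝ)..t, eMap M hM (-(g (x s))) = y t - y 0 :=
      intervalIntegral.integral_eq_sub_of_hasDerivAt (fun s _ => hy s)
        (hcont.intervalIntegrable _ _)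
    have hnorm : ‖y t - y 0‖ ≤ ∫ s in (0:ℝ)..t, φ s := by
      rw [← hftc]
      calc ‖∫ s in (0:ℝ)..t, eMap M hM (-(g (x s)))‖
          ≤ ∫ s in (0:ℝ)..t, ‖eMap M hM (-(g (x s)))‖ :=
            intervalIntegral.norm_integral_le_integral_norm ht
        _ = ∫ s in (0:ℝ)..t, φ s := by
            apply intervalIntegral.integral_congr
            intro s _
            show ‖eMap M hM (-(g (x s)))‖ = φ s
            rw [map_neg, norm_neg, ← mNorm_eq_norm_eMap hM]
    have h1 : mNorm M (x t - xstar) = ‖y t - eMap M hM xstar‖ := by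
      rw [mNorm_eq_norm_eMap hM, map_sub]
    have h2 : mNorm M (x 0 - xstar) = ‖y 0 - eMap M hM xstar‖ := by
      rw [mNorm_eq_norm_eMap hM, map_sub]
    rw [h1, h2]
    have h3 : y t - eMap M hM xstar = (y 0 - eMap M hM xstar) + (y t - y 0) := by abel
    calc ‖y t - eMap M hM xstar‖
        ≤ ‖y 0 - eMap M hM xstar‖ + ‖y t - y 0‖ := by rw [h3]; exact norm_add_le _ _
      _ ≤ _ := by linarith [hnorm]
  -- invariance of the δ₁-ball
  have inv : ∀ t : ℝ, 0 ≤ t → mNorm M (x t - xstar) < δ₁/2 := by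
    by_contra hcon
    push_neg at hcon
    obtain ⟨t₀, ht₀, ht₀ge⟩ := hcon
    set ρ : ℝ → ℝ := fun s => mNorm M (x s - xstar) with hρdef
    have ρcont : Continuous ρ := mNormCont.comp (xcont.sub continuous_const)
    set B : Set ℝ := {s | 0 ≤ s ∧ δ₁/2 ≤ ρ s} with hBdef
    have hBne : B.Nonempty := ⟨t₀, ht₀, ht₀ge⟩
    have hBclosed : IsClosed B :=
      (isClosed_le continuous_const continuous_id).inter
        (isClosed_le continuous_const ρcont)
    have hBbdd : BddBelow B := ⟨0, fun s hs => hs.1⟩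
    set T := sInf B with hTdef
    have hTB : T ∈ B := hBclosed.csInf_mem hBne hBbdd
    have hT0 : 0 ≤ T := hTB.1
    have hρ0 : ρ 0 < δ₁/8 := lt_of_lt_of_le hx0 hδ₂le
    have hTpos : 0 < T := by
      rcases eq_or_lt_of_le hT0 with h|h
      · exfalso
        have := hTB.2
        rw [← h] at this
        linarith
      · exact h
    have hlt : ∀ s, 0 ≤ s → s < T → ρ s < δ₁/2 := by
      intro s hs hsT
      by_contra hcon2
      push_neg at hcon2
      exact absurd (csInf_le hBbdd ⟨hs, hcon2⟩) (not_le.2 hsT)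
    have hρT : ρ T ≤ δ₁/2 := by
      have htd : Filter.Tendsto ρ (nhdsWithin T (Set.Iio T)) (nhds (ρ T)) :=
        (ρcont.tendsto T).mono_left nhdsWithin_le_nhds
      apply le_of_tendsto htd
      filter_upwards [Ioo_mem_nhdsLT_of_mem
        (show T ∈ Set.Ioc (0:ℝ) T from ⟨hTpos, le_refl T⟩)] with s hs
      exact (hlt s hs.1.le hs.2).le
    have hball : ∀ s ∈ Set.Icc (0:ℝ) T, mNorm M (x s - xstar) < δ₁ := by
      intro s hs
      rcases lt_or_eq_of_le hs.2 with h|h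
      · exact lt_trans (hlt s hs.1 h) (by linarith)
      · rw [h]; linarith [hρT]
    have hF0 : F 0 < ε := hδ₂J (x 0) hx0
    have hK : (c/(1-θ)) * (F 0)^(1-θ) ≤ δ₁/8 := by
      have h1 : (F 0)^(1-θ) ≤ ε^(1-θ) :=
        Real.rpow_le_rpow (Fnonneg 0) hF0.le h1θ.le
      calc (c/(1-θ)) * (F 0)^(1-θ) ≤ (c/(1-θ)) * ε^(1-θ) := by
            apply mul_le_mul_of_nonneg_left h1 (by positivity)
        _ ≤ δ₁/8 := hεpow
    have hintT := claim T hT0 hball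
    have hρb := ρbound T hT0
    have : ρ T < δ₁/2 := by
      calc ρ T ≤ ρ 0 + ∫ s in (0:ℝ)..T, φ s := hρb
        _ ≤ δ₁/8 + δ₁/8 := by linarith
        _ < δ₁/2 := by linarith
    linarith [hTB.2]
  -- conclusion
  have bound : ∀ b : ℝ, 0 ≤ b → ∫ s in (0:ℝ)..b, φ s ≤ (c/(1-θ)) * (F 0) ^ (1-θ) := by
    intro b hb
    exact claim b hb (fun s hs => lt_trans (inv s hs.1) (by linarith))
  set K : ℝ := (c/(1-θ)) * (F 0) ^ (1-θ)
  have hKnonneg : 0 ≤ K := by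
    apply mul_nonneg (by positivity)
    exact Real.rpow_nonneg (Fnonneg 0) _
  have hint : IntegrableOn φ (Set.Ioi (0:ℝ)) := by
    apply integrableOn_Ioi_of_intervalIntegral_norm_bounded (l := Filter.atTop)
      (b := fun r : ℝ => r) K
    · intro i
      exact (φcont.integrableOn_Icc).mono_set Set.Ioc_subset_Icc_self
    · exact Filter.tendsto_id
    · filter_upwards [Filter.eventually_ge_atTop (0:ℝ)] with i hi
      have : ∀ s, ‖φ s‖ = φ s := fun s => Real.norm_of_nonneg (φnonneg s)
      simp only [this]
      exact bound i hi
  have hintIci : IntegrableOn φ (Set.Ici (0:ℝ)) := by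
    rwa [integrableOn_Ici_iff_integrableOn_Ioi]
  refine ⟨hintIci, ?_⟩
  rw [integral_Ici_eq_integral_Ioi]
  have htend := intervalIntegral_tendsto_integral_Ioi 0 hint Filter.tendsto_id
  apply le_of_tendsto htend
  filter_upwards [Filter.eventually_ge_atTop (0:ℝ)] with i hi
  exact bound i hi
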